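/- Let p be a prime, G a finite p-group, and k a perfect field of characteristic p equipped with an action of G by ring automorphisms. Then the norm map is surjective onto the G-invariants of kˣ: for every a ∈ kˣ with g(a) = a for all g ∈ G, there exists x ∈ kˣ such that ∏_{g ∈ G} g(x) = a. (Equivalently, the Tate cohomology group Ĥ^0(G, kˣ) vanishes.) -/

import Mathlib

/-- If `G` is a finite `p`-group acting by ring automorphisms on a perfect field `k`
of characteristic `p`, then the norm map is surjective onto the `G`-invariants of
`kˣ`: every `G`-invariant unit `a` is the norm `∏ g : G, g • x` of some unit `x`
(vanishing of `Ĥ⁰(G, kˣ)`, from the proof of Lemma 2). -/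
theorem stmt4 (p : ℕ) (hp : p.Prime) (G : Type) [Group G] [Fintype G]
    (hG : IsPGroup p G) (k : Type) [Field k] [CharP k p] [PerfectField k]
    [MulSemiringAction G k] :
    ∀ a : kˣ, (∀ g : G, g • (a : k) = (a : k)) →
      ∃ x : kˣ, ∏ g : G, g • (x : k) = (a : k) := by
  intro a ha
  have : Fact p.Prime := ⟨hp⟩
  haveI : ExpChar k p := .prime hp
  obtain ⟨n, hn⟩ := IsPGroup.iff_card.mp hG
  have hfrob : Function.Bijective ((frobenius k p)^[n]) :=
    Function.Bijective.iterate ((PerfectRing.bijective_frobenius : Function.Bijective (frobenius k p))) n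
  obtain ⟨x, hx⟩ := hfrob.surjective (a : k)
  rw [iterate_frobenius] at hx
  have hx0 : x ≠ 0 := by
    intro h
    rw [h, zero_pow (pow_ne_zero n hp.ne_zero)] at hx
    exact a.ne_zero hx.symm
  have hfix : ∀ g : G, g • x = x := by
    intro g
    apply (Function.Bijective.iterate ((PerfectRing.bijective_frobenius : Function.Bijective (frobenius k p))) n).injective
    show (⇑(frobenius k p))^[n] (g • x) = (⇑(frobenius k p))^[n] x
    rw [iterate_frobenius, iterate_frobenius, ← smul_pow', hx, ha]
  refine ⟨Units.mk0 x hx0, ?_⟩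
  simp only [Units.val_mk0, hfix]
  rw [Finset.prod_const, Finset.card_univ, ← Nat.card_eq_fintype_card, hn, hx]
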